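/- Let K be a nonempty convex compact subset of a Hausdorff locally convex topological vector space, f : K → K a continuous affine map, and suppose p ∈ K satisfies: for every n ≥ 1 there exists xₙ ∈ K with p = (1/n)·(xₙ + f(xₙ) + … + f^{n−1}(xₙ)). Then p is a fixed point of f, i.e., f(p) = p. -/

import Mathlib

open Finset
open Pointwise

def AffOn {X : Type*} [AddCommGroup X] [Module ℝ X] (K : Set X) (f : K → K) : Prop :=
  ∀ (x y : K) (t : ℝ), 0 ≤ t → t ≤ 1 →
    ∀ h : t • (x : X) + (1 - t) • (y : X) ∈ K,
      (f ⟨_, h⟩ : X) = t • (f x : X) + (1 - t) • (f y : X)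

private lemma avg_succ {X : Type*} [AddCommGroup X] [Module ℝ X]
    (v : ℕ → X) (n : ℕ) (hn : n ≠ 0) :
    (1 / ((n : ℝ) + 1)) • ∑ k ∈ range (n + 1), v k
      = (1 / ((n : ℝ) + 1)) • v n
        + (1 - 1 / ((n : ℝ) + 1)) • ((1 / (n : ℝ)) • ∑ k ∈ range n, v k) := by
  have hn' : (n : ℝ) ≠ 0 := Nat.cast_ne_zero.mpr hn
  have hscal : (1 - 1 / ((n : ℝ) + 1)) * (1 / (n : ℝ)) = 1 / ((n : ℝ) + 1) := by
    field_simp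
    ring
  rw [sum_range_succ, smul_add, smul_smul, hscal, add_comm]

private lemma aff_avg {X : Type*} [AddCommGroup X] [Module ℝ X]
    {K : Set X} (hconv : Convex ℝ K) (f : K → K) (haff : AffOn K f) :
    ∀ n : ℕ, 1 ≤ n → ∀ g : ℕ → K,
      ∀ h : (1 / (n : ℝ)) • ∑ k ∈ range n, (g k : X) ∈ K,
        (f ⟨_, h⟩ : X) = (1 / (n : ℝ)) • ∑ k ∈ range n, (f (g k) : X) := by
  intro n hn
  induction n, hn using Nat.le_induction with
  | base =>
    intro g h
    have hx : (1 / ((1 : ℕ) : ℝ)) • ∑ k ∈ range 1, (g k : X) = (g 0 : X) := by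
      simp
    have : (⟨_, h⟩ : K) = g 0 := Subtype.ext hx
    rw [this]; simp
  | succ n hn ih =>
    intro g h
    have hn0 : n ≠ 0 := Nat.one_le_iff_ne_zero.mp hn
    have hn' : (n : ℝ) ≠ 0 := Nat.cast_ne_zero.mpr hn0
    -- membership of the average of the first n points
    have hmem : (1 / (n : ℝ)) • ∑ k ∈ range n, (g k : X) ∈ K := by
      rw [Finset.smul_sum]
      refine hconv.sum_mem (fun i _ => by positivity) ?_ (fun i _ => (g i).2)
      simp [Finset.sum_const]
      field_simp
    set t : ℝ := 1 / ((n : ℝ) + 1) with ht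
    have ht0 : (0 : ℝ) ≤ t := by positivity
    have ht1 : t ≤ 1 := by
      rw [ht, div_le_one (by positivity)]
      have : (1 : ℝ) ≤ (n : ℝ) + 1 := by
        have : (0 : ℝ) ≤ (n : ℝ) := Nat.cast_nonneg n
        linarith
      linarith
    have hcast : ((n + 1 : ℕ) : ℝ) = (n : ℝ) + 1 := by push_cast; ring
    have hkey : (1 / ((n + 1 : ℕ) : ℝ)) • ∑ k ∈ range (n + 1), (g k : X)
        = t • ((g n : X)) + (1 - t) • ((1 / (n : ℝ)) • ∑ k ∈ range n, (g k : X)) := by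
      rw [hcast]; exact avg_succ (fun k => (g k : X)) n hn0
    have h' : t • ((g n : X)) + (1 - t) • ((⟨_, hmem⟩ : K) : X) ∈ K := by
      rw [show (((⟨_, hmem⟩ : K)) : X) = (1 / (n : ℝ)) • ∑ k ∈ range n, (g k : X) from rfl,
        ← hkey]
      exact h
    have heq : (⟨_, h⟩ : K) = (⟨_, h'⟩ : K) := Subtype.ext hkey
    rw [heq, haff (g n) ⟨_, hmem⟩ t ht0 ht1 h', ih g hmem, hcast,
      avg_succ (fun k => (f (g k) : X)) n hn0]

theorem stmt5 {X : Type*} [AddCommGroup X] [Module ℝ X] [TopologicalSpace X]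
    [IsTopologicalAddGroup X] [ContinuousSMul ℝ X] [T2Space X] [LocallyConvexSpace ℝ X]
    (K : Set X) (hne : K.Nonempty) (hconv : Convex ℝ K) (hcomp : IsCompact K)
    (f : K → K) (hf : Continuous f) (haff : AffOn K f)
    (p : K)
    (hp : ∀ n : ℕ, 1 ≤ n → ∃ x : K,
      (p : X) = (1 / (n : ℝ)) • ∑ k ∈ Finset.range n, (f^[k] x : X)) :
    f p = p := by
  -- it suffices to show the difference d = f p - p is zero
  have hd : ∀ V ∈ nhds (0 : X), (p : X) - (f p : X) ∈ V := by
    intro V hV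
    -- K - K is von Neumann bounded
    letI : UniformSpace X := IsTopologicalAddGroup.rightUniformSpace X
    haveI : IsUniformAddGroup X := isUniformAddGroup_of_addCommGroup
    have hKK : IsCompact (K - K) := by
      rw [sub_eq_add_neg]; exact hcomp.add hcomp.neg
    have hb : Bornology.IsVonNBounded ℝ (K - K) :=
      hKK.totallyBounded.isVonNBounded ℝ
    obtain ⟨r, hr⟩ := absorbs_iff_norm.mp (hb hV)
    obtain ⟨n, hn1, hnr⟩ : ∃ n : ℕ, 1 ≤ n ∧ r ≤ (n : ℝ) := by
      obtain ⟨m, hm⟩ := exists_nat_ge r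
      exact ⟨m + 1, Nat.le_add_left 1 m, le_trans hm (by push_cast; linarith)⟩
    obtain ⟨x, hx⟩ := hp n hn1
    have hnpos : (0 : ℝ) < (n : ℝ) := by exact_mod_cast hn1
    -- p equals the average, so f p equals the average of images
    have hmem : (1 / (n : ℝ)) • ∑ k ∈ range n, ((f^[k] x : K) : X) ∈ K := hx ▸ p.2
    have hpeq : p = (⟨_, hmem⟩ : K) := Subtype.ext hx
    have hfp : (f p : X) = (1 / (n : ℝ)) • ∑ k ∈ range n, (f (f^[k] x) : X) := by
      rw [hpeq]; exact aff_avg hconv f haff n hn1 (fun k => f^[k] x) hmem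
    have hfp' : (f p : X) = (1 / (n : ℝ)) • ∑ k ∈ range n, (f^[k + 1] x : X) := by
      rw [hfp]
      congr 1
      refine Finset.sum_congr rfl fun k _ => ?_
      rw [Function.iterate_succ_apply']
    -- telescoping
    have htel : (p : X) - (f p : X)
        = (1 / (n : ℝ)) • (((f^[0] x : K) : X) - ((f^[n] x : K) : X)) := by
      rw [hx, hfp', ← smul_sub, ← Finset.sum_sub_distrib]
      congr 1
      exact Finset.sum_range_sub' (fun k => ((f^[k] x : K) : X)) n
    have hsub : ((f^[0] x : K) : X) - ((f^[n] x : K) : X) ∈ K - K :=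
      Set.sub_mem_sub (f^[0] x).2 (f^[n] x).2
    have habs : K - K ⊆ (n : ℝ) • V := hr (n : ℝ) (by rwa [Real.norm_natCast])
    obtain ⟨v, hv, hveq⟩ := habs hsub
    rw [htel, ← hveq, smul_smul, one_div, inv_mul_cancel₀ (ne_of_gt hnpos), one_smul]
    exact hv
  -- conclude by T2 (hence T1)
  by_contra hne'
  have hne2 : (p : X) - (f p : X) ≠ 0 :=
    sub_ne_zero.mpr (fun h => hne' (Subtype.ext h.symm))
  have h0 : (0 : X) ∈ ({(p : X) - (f p : X)}ᶜ : Set X) := by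
    simpa using hne2.symm
  exact (hd _ (isOpen_compl_singleton.mem_nhds h0)) (Set.mem_singleton _)
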